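/- (Parameter recovery.) Let l : ℝ^p → ℝ be differentiable with associated set function f(S) = l(β^{(S)}) − l(0), and suppose l is m-strongly concave on Ω_{s+r} with m > 0. Let S_r be a set of size at most r, β̂^r = β^{(S_r)}, and let β^s be any vector supported on a set S*_s of size at most s with l(β^s) ≥ l(0). Suppose f(S_r) ≥ C · f(S*_s) for some C ∈ [0,1]. Then ‖β̂^r − β^s‖₂² ≤ (4/m²) · ‖∇l(β^s)‖_{2,(s+r)}² + (4/m) · (1 − C) · (l(β^s) − l(0)), where ‖v‖_{2,k}² := max over subsets T of size k of Σ_{j∈T} v_j² (sum of the k largest squared coordinates). -/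

import Mathlib

open Finset

noncomputable section

/-- Number of nonzero coordinates (the "ℓ₀ norm") of a vector. -/
def spar {p : ℕ} (v : Fin p → ℝ) : ℕ := (Finset.univ.filter fun i => v i ≠ 0).card

/-- Support of a vector, as a `Finset`. -/
def suppF {p : ℕ} (v : Fin p → ℝ) : Finset (Fin p) :=
  Finset.univ.filter fun i => v i ≠ 0

/-- `Ω_k`: pairs of `k`-sparse vectors differing in at most `k` coordinates. -/
def Omega {p : ℕ} (k : ℕ) : Set ((Fin p → ℝ) × (Fin p → ℝ)) :=
  {q | spar q.1 ≤ k ∧ spar q.2 ≤ k ∧ spar (q.1 - q.2) ≤ k}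

/-- `Ω̃_k`: pairs of `k`-sparse vectors differing in at most one coordinate. -/
def OmegaT {p : ℕ} (k : ℕ) : Set ((Fin p → ℝ) × (Fin p → ℝ)) :=
  {q | spar q.1 ≤ k ∧ spar q.2 ≤ k ∧ spar (q.1 - q.2) ≤ 1}

/-- `l` is `m`-strongly concave on `Ω`. -/
def RStrongConcaveOn {p : ℕ} (l : (Fin p → ℝ) → ℝ) (m : ℝ)
    (Ω : Set ((Fin p → ℝ) × (Fin p → ℝ))) : Prop :=
  ∀ x y : Fin p → ℝ, (x, y) ∈ Ω →
    l y - l x - fderiv ℝ l x (y - x) ≤ -(m / 2) * ∑ i, (y i - x i) ^ 2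

/-- `l` is `M`-smooth on `Ω`. -/
def RSmoothOn {p : ℕ} (l : (Fin p → ℝ) → ℝ) (M : ℝ)
    (Ω : Set ((Fin p → ℝ) × (Fin p → ℝ))) : Prop :=
  ∀ x y : Fin p → ℝ, (x, y) ∈ Ω →
    -(M / 2) * ∑ i, (y i - x i) ^ 2 ≤ l y - l x - fderiv ℝ l x (y - x)

/-- parameter recovery. The quantity
`⨆ T : {T // T.card ≤ s + r}, ∑ j in T, (∇l(βs) j)²` is `‖∇l(βs)‖₂,(s+r)²`,
the sum of the `s + r` largest squared coordinates of the gradient. -/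
theorem parameter_recovery
    (p : ℕ) (l : (Fin p → ℝ) → ℝ) (hl : Differentiable ℝ l)
    (β : Finset (Fin p) → (Fin p → ℝ))
    (hβsupp : ∀ S : Finset (Fin p), suppF (β S) ⊆ S)
    (hβmax : ∀ S : Finset (Fin p), ∀ v : Fin p → ℝ, suppF v ⊆ S → l v ≤ l (β S))
    (f : Finset (Fin p) → ℝ) (hf : ∀ S, f S = l (β S) - l 0)
    (s r : ℕ)
    (m : ℝ) (hm : 0 < m)
    (hconc : RStrongConcaveOn l m (Omega (s + r)))
    (Sr : Finset (Fin p)) (hSr : Sr.card ≤ r)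
    (Sstars : Finset (Fin p)) (hSstars : Sstars.card ≤ s)
    (βs : Fin p → ℝ) (hβssupp : suppF βs ⊆ Sstars) (hβsval : l 0 ≤ l βs)
    (C : ℝ) (hC0 : 0 ≤ C) (hC1 : C ≤ 1)
    (happrox : C * f Sstars ≤ f Sr) :
    ∑ i, (β Sr i - βs i) ^ 2 ≤
      4 / m ^ 2 *
          (⨆ T : {T : Finset (Fin p) // T.card ≤ s + r},
            ∑ j ∈ (T : Finset (Fin p)), (fderiv ℝ l βs (Pi.single j 1)) ^ 2) +
        4 / m * (1 - C) * (l βs - l 0) := by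
  classical
  set g : Fin p → ℝ := fun j => fderiv ℝ l βs (Pi.single j 1) with hg
  set Δ : Fin p → ℝ := fun i => β Sr i - βs i with hΔ
  set T : Finset (Fin p) := Sr ∪ Sstars with hT
  have hTcard : T.card ≤ s + r := by
    calc T.card ≤ Sr.card + Sstars.card := Finset.card_union_le _ _
      _ ≤ r + s := add_le_add hSr hSstars
      _ = s + r := by ring
  -- vanishing outside supports
  have hz1 : ∀ i, i ∉ Sr → β Sr i = 0 := by
    intro i hi; by_contra h
    exact hi (hβsupp Sr (by simp [suppF, h]))
  have hz2 : ∀ i, i ∉ Sstars → βs i = 0 := by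
    intro i hi; by_contra h
    exact hi (hβssupp (by simp [suppF, h]))
  -- membership in Omega (s+r)
  have hmem : ((βs, β Sr) : (Fin p → ℝ) × (Fin p → ℝ)) ∈ Omega (s + r) := by
    refine ⟨?_, ?_, ?_⟩
    · have : suppF βs ⊆ Sstars := hβssupp
      calc spar βs = (suppF βs).card := rfl
        _ ≤ Sstars.card := Finset.card_le_card this
        _ ≤ s := hSstars
        _ ≤ s + r := Nat.le_add_right _ _
    · calc spar (β Sr) = (suppF (β Sr)).card := rfl
        _ ≤ Sr.card := Finset.card_le_card (hβsupp Sr)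
        _ ≤ r := hSr
        _ ≤ s + r := Nat.le_add_left _ _
    · have hsub : suppF (βs - β Sr) ⊆ T := by
        intro i hi
        simp only [suppF, Finset.mem_filter, Finset.mem_univ, true_and, Pi.sub_apply] at hi
        by_contra hiT
        simp only [hT, Finset.mem_union, not_or] at hiT
        rw [hz1 i hiT.1, hz2 i hiT.2] at hi
        simp at hi
      calc spar (βs - β Sr) = (suppF (βs - β Sr)).card := rfl
        _ ≤ T.card := Finset.card_le_card hsub
        _ ≤ s + r := hTcard
  have hcon := hconc βs (β Sr) hmem
  -- linearity of the derivative
  have hdecomp : (β Sr - βs) = ∑ i, Δ i • (Pi.single i 1 : Fin p → ℝ) := by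
    funext j
    simp [Finset.sum_apply, Pi.single_apply, hΔ]
  have hlin : fderiv ℝ l βs (β Sr - βs) = ∑ i, Δ i * g i := by
    rw [hdecomp, map_sum]
    simp [hg, smul_eq_mul]
  -- restrict the sum to T
  have hsumT : ∑ i, Δ i * g i = ∑ i ∈ T, Δ i * g i := by
    refine (Finset.sum_subset (Finset.subset_univ T) ?_).symm
    intro i _ hiT
    simp only [hT, Finset.mem_union, not_or] at hiT
    simp [hΔ, hz1 i hiT.1, hz2 i hiT.2]
  -- per-term AM-GM bound
  have hterm : ∀ i ∈ T, m * (Δ i * g i) ≤ g i ^ 2 + m ^ 2 / 4 * Δ i ^ 2 := by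
    intro i _
    nlinarith [sq_nonneg (g i - m / 2 * Δ i)]
  set S := ∑ i, (β Sr i - βs i) ^ 2 with hS
  have hSΔ : S = ∑ i, Δ i ^ 2 := by rfl
  set G2 := ∑ j ∈ T, g j ^ 2 with hG2
  have hbound : m * ∑ i ∈ T, Δ i * g i ≤ G2 + m ^ 2 / 4 * S := by
    have h2 : ∑ i ∈ T, Δ i ^ 2 ≤ S := by
      rw [hSΔ]
      exact Finset.sum_le_univ_sum_of_nonneg (fun i => sq_nonneg _)
    have h3 : (0:ℝ) ≤ m ^ 2 / 4 := by positivity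
    calc m * ∑ i ∈ T, Δ i * g i = ∑ i ∈ T, m * (Δ i * g i) := Finset.mul_sum _ _ _
      _ ≤ ∑ i ∈ T, (g i ^ 2 + m ^ 2 / 4 * Δ i ^ 2) := Finset.sum_le_sum hterm
      _ = G2 + m ^ 2 / 4 * ∑ i ∈ T, Δ i ^ 2 := by
          rw [Finset.sum_add_distrib, Finset.mul_sum]
      _ ≤ G2 + m ^ 2 / 4 * S := by nlinarith
  -- function-value gap
  have hgap : l βs - l (β Sr) ≤ (1 - C) * (l βs - l 0) := by
    have h1 : l βs - l 0 ≤ f Sstars := by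
      rw [hf]; linarith [hβmax Sstars βs hβssupp]
    have h2 : C * (l βs - l 0) ≤ f Sr :=
      le_trans (mul_le_mul_of_nonneg_left h1 hC0) happrox
    rw [hf] at h2
    nlinarith
  -- combine
  have hmain : m ^ 2 / 4 * S ≤ G2 + m * ((1 - C) * (l βs - l 0)) := by
    rw [hlin, hsumT] at hcon
    -- hcon : l (β Sr) - l βs - ∑ i ∈ T, Δ i * g i ≤ -(m/2) * S
    have hc2 : m / 2 * S ≤ (1 - C) * (l βs - l 0) + ∑ i ∈ T, Δ i * g i := by
      have : l (β Sr) - l βs - ∑ i ∈ T, Δ i * g i ≤ -(m / 2) * S := hcon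
      linarith [hgap]
    nlinarith [hbound, hc2]
  -- bound G2 by the supremum
  have hsup : G2 ≤ ⨆ T : {T : Finset (Fin p) // T.card ≤ s + r},
      ∑ j ∈ (T : Finset (Fin p)), g j ^ 2 := by
    have hbdd : BddAbove (Set.range fun T : {T : Finset (Fin p) // T.card ≤ s + r} =>
        ∑ j ∈ (T : Finset (Fin p)), g j ^ 2) := (Set.finite_range _).bddAbove
    exact le_ciSup hbdd ⟨T, hTcard⟩
  have hm2 : (0:ℝ) < m ^ 2 := by positivity
  set Sup := ⨆ T : {T : Finset (Fin p) // T.card ≤ s + r},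
      ∑ j ∈ (T : Finset (Fin p)), g j ^ 2 with hSup
  have : S ≤ (4 * Sup + 4 * m * ((1 - C) * (l βs - l 0))) / m ^ 2 := by
    rw [le_div_iff₀ hm2]
    nlinarith [hmain, hsup]
  calc S ≤ (4 * Sup + 4 * m * ((1 - C) * (l βs - l 0))) / m ^ 2 := this
    _ = 4 / m ^ 2 * Sup + 4 / m * (1 - C) * (l βs - l 0) := by
        field_simp
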